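/- Let h : 𝒫_X → 𝒫_Y be a homomorphism of 𝒫-structures, let j : V → M be the induced elementary embedding into the transitive collapse of the term model (j(p) = ⟦0,⟨⟩,c_p⟧), and assume Łoś's theorem and the identification y = ⟦1,⟨y⟩,π⟧ for y ∈ Y. Then for all A ⊆ X^{<ω}, h(A) = j(A) ∩ Y^{<ω}; moreover Y^{<ω} ⊆ j(X^{<ω}) and Y ⊆ j(X). -/

import Mathlib

namespace WVP

/-- `tup X k`: the set of `k`-tuples (as lists) of elements of the ZF-set `X`. -/
def tup (X : ZFSet) (k : ℕ) : Set (List ZFSet) := {l | l.length = k ∧ ∀ z ∈ l, z ∈ X}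

/-- `finTup X`: the set of all finite tuples from `X`, i.e. `X^{<ω}`. -/
def finTup (X : ZFSet) : Set (List ZFSet) := {l | ∀ z ∈ l, z ∈ X}

/-- `WFset A`: `A` is well-founded under the reverse of the proper-initial-segment
relation, i.e. there is no infinite chain `a₁ ⊊ a₂ ⊊ ⋯` of elements of `A`. -/
def WFset (A : Set (List ZFSet)) : Prop :=
  ¬ ∃ g : ℕ → List ZFSet, (∀ n, g n ∈ A) ∧ ∀ n, g n <+: g (n + 1) ∧ g n ≠ g (n + 1)

/-- The coordinate projection `(x₁,…,x_k) ↦ (x_{i₁},…,x_{i_j})` (0-based indices). -/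
def proj (is : List ℕ) (l : List ZFSet) : List ZFSet := is.map fun i => l.getD i ∅

/-- The inverse image operator `Proj⁻¹_{k,(i₁,…,i_j)}` of the coordinate projection
`proj is : X^k → X^j`, mapping subsets of `X^j` to subsets of `X^k`. -/
def ProjInv (X : ZFSet) (k : ℕ) (is : List ℕ) (A : Set (List ZFSet)) : Set (List ZFSet) :=
  {l | l ∈ tup X k ∧ proj is l ∈ A}

/-- The bounded projection operator `BP_k` on subsets of `X^{k+1}`:
`BP_k(A) = {(x₁,…,x_{k+1}) ∈ X^{k+1} : ∃ z ∈ x_{k+1}, (x₁,…,x_k,z) ∈ A}`. -/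
def BP (X : ZFSet) (k : ℕ) (A : Set (List ZFSet)) : Set (List ZFSet) :=
  {l | l ∈ tup X (k + 1) ∧ ∃ z, z ∈ l.getLastD ∅ ∧ l.dropLast ++ [z] ∈ A}

/-- A homomorphism of 𝒫-structures `𝒫_X → 𝒫_Y`: a Boolean algebra homomorphism
`𝒫(X^{<ω}) → 𝒫(Y^{<ω})` sending `X^k` to `Y^k`, preserving the well-foundedness
predicate `WF` (forward direction), and commuting with the inverse-projection
operators `Proj⁻¹` and the bounded projection operators `BP_k`. -/
structure IsPHom (X Y : ZFSet) (h : Set (List ZFSet) → Set (List ZFSet)) : Prop where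
  subset_finTup : ∀ A ⊆ finTup X, h A ⊆ finTup Y
  map_inter : ∀ A ⊆ finTup X, ∀ B ⊆ finTup X, h (A ∩ B) = h A ∩ h B
  map_compl : ∀ A ⊆ finTup X, h (finTup X \ A) = finTup Y \ h A
  map_const : ∀ k, h (tup X k) = tup Y k
  map_wf : ∀ A ⊆ finTup X, WFset A → WFset (h A)
  map_projInv : ∀ (j k : ℕ) (is : List ℕ), is.length = j → (∀ i ∈ is, i < k) →
    ∀ A ⊆ tup X j, h (ProjInv X k is A) = ProjInv Y k is (h A)
  map_bp : ∀ (k : ℕ), ∀ A ⊆ tup X (k + 1), h (BP X k A) = BP Y k (h A)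

/-- The term model `M*`: triples `(k, b, f)` with `b ∈ Y^k` and `f : X^k → V`
(represented as a total function on tuples, only its values on `X^k` matter). -/
structure MStar (X Y : ZFSet) where
  k : ℕ
  b : List ZFSet
  hb : b ∈ tup Y k
  f : List ZFSet → ZFSet

/-- The membership relation `∈*` of the term model:
`(k₁,b₁,f₁) ∈* (k₂,b₂,f₂)` iff `b₁b₂ ∈ h({a₁a₂ : f₁(a₁) ∈ f₂(a₂)})`. -/
def memStar (X Y : ZFSet) (h : Set (List ZFSet) → Set (List ZFSet))
    (p q : MStar X Y) : Prop :=
  p.b ++ q.b ∈ h {l | ∃ a₁ ∈ tup X p.k, ∃ a₂ ∈ tup X q.k, l = a₁ ++ a₂ ∧ p.f a₁ ∈ q.f a₂}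

/-- The equality relation `=*` of the term model:
`(k₁,b₁,f₁) =* (k₂,b₂,f₂)` iff `b₁b₂ ∈ h({a₁a₂ : f₁(a₁) = f₂(a₂)})`. -/
def eqStar (X Y : ZFSet) (h : Set (List ZFSet) → Set (List ZFSet))
    (p q : MStar X Y) : Prop :=
  p.b ++ q.b ∈ h {l | ∃ a₁ ∈ tup X p.k, ∃ a₂ ∈ tup X q.k, l = a₁ ++ a₂ ∧ p.f a₁ = q.f a₂}

/-- "Łoś's theorem holds" for (the interpretations of) an `n`-ary formula, where `P`
is its interpretation in `V` and `Q` its interpretation in the term model `M*`: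
for all `(k₁,b₁,f₁),…,(kₙ,bₙ,fₙ)` in `M*`,
`M* ⊨ φ[(k₁,b₁,f₁),…,(kₙ,bₙ,fₙ)]` iff `b₁⋯bₙ ∈ h({a₁⋯aₙ : V ⊨ φ[f₁(a₁),…,fₙ(aₙ)]})`. -/
def LosHolds (X Y : ZFSet) (h : Set (List ZFSet) → Set (List ZFSet)) (n : ℕ)
    (P : (Fin n → ZFSet) → Prop) (Q : (Fin n → MStar X Y) → Prop) : Prop :=
  ∀ t : Fin n → MStar X Y,
    Q t ↔ (List.ofFn fun i => (t i).b).flatten ∈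
      h {l | ∃ a : Fin n → List ZFSet, (∀ i, a i ∈ tup X (t i).k) ∧
        l = (List.ofFn a).flatten ∧ P fun i => (t i).f (a i)}

attribute [local instance] Classical.propDecidable

noncomputable instance (n : ℕ) (F : (Fin n → ZFSet) → ZFSet) : ZFSet.Definable n F :=
  Classical.allZFSetDefinable F

/-- Coding of a finite tuple of ZF-sets as a single ZF-set, by iterated
Kuratowski pairing: `⟨⟩ ↦ ∅`, `(x, l) ↦ pair x (code l)`. -/
def listCode : List ZFSet → ZFSet
  | [] => ∅
  | x :: l => ZFSet.pair x (listCode l)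

/-- The ZF-set `X^k` of (codes of) `k`-tuples from `X`. -/
def kTupZ (X : ZFSet) : ℕ → ZFSet
  | 0 => {∅}
  | k + 1 => ZFSet.sep (fun z => ∃ x ∈ X, ∃ t ∈ kTupZ X k, z = ZFSet.pair x t)
      (ZFSet.powerset (ZFSet.powerset (X ∪ kTupZ X k)))

/-- The ZF-set `X^{<ω}` of (codes of) all finite tuples from `X`. -/
noncomputable def finTupZ (X : ZFSet) : ZFSet :=
  ZFSet.sUnion (ZFSet.range fun k : ℕ => kTupZ X k)

/-- The ZF-set coding a collection `A` of finite tuples from `X`. -/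
noncomputable def codeZ (X : ZFSet) (A : Set (List ZFSet)) : ZFSet :=
  ZFSet.sep (fun z => ∃ l ∈ A, z = listCode l) (finTupZ X)

/-- The trivial projection `π : X¹ → X`, `π(⟨x⟩) = x`. -/
def piFun : List ZFSet → ZFSet := fun l => l.getD 0 ∅

/-- The map `j* : V → M*`, `p ↦ (0, ⟨⟩, c_p)`. -/
def jStar (X Y : ZFSet) (p : ZFSet) : MStar X Y :=
  ⟨0, [], ⟨rfl, by simp⟩, fun _ => p⟩

/-! ### Auxiliary lemmas -/

theorem pair_ne_empty (x y : ZFSet) : ZFSet.pair x y ≠ ∅ := by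
  intro hcontra
  have : ({x} : ZFSet) ∈ ZFSet.pair x y := by simp [ZFSet.pair]
  rw [hcontra] at this
  exact (ZFSet.notMem_empty _) this

theorem listCode_injective : Function.Injective listCode := by
  intro l₁
  induction l₁ with
  | nil =>
    intro l₂ hc
    cases l₂ with
    | nil => rfl
    | cons y m => exact absurd hc.symm (pair_ne_empty _ _)
  | cons x l ih =>
    intro l₂ hc
    cases l₂ with
    | nil => exact absurd hc (pair_ne_empty _ _)
    | cons y m =>
      simp only [listCode] at hc
      obtain ⟨h1, h2⟩ := ZFSet.pair_injective hc
      rw [h1, ih h2]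

theorem mem_kTupZ {X : ZFSet} {k : ℕ} {z : ZFSet} :
    z ∈ kTupZ X k ↔ ∃ l ∈ tup X k, z = listCode l := by
  induction k generalizing z with
  | zero =>
    simp only [kTupZ, ZFSet.mem_singleton]
    constructor
    · rintro rfl; exact ⟨[], ⟨rfl, by simp⟩, rfl⟩
    · rintro ⟨l, ⟨hl, -⟩, rfl⟩
      rw [List.length_eq_zero_iff.mp hl]; rfl
  | succ k ih =>
    simp only [kTupZ, ZFSet.mem_sep]
    constructor
    · rintro ⟨-, x, hx, t, ht, rfl⟩
      obtain ⟨m, ⟨hm1, hm2⟩, rfl⟩ := ih.mp ht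
      refine ⟨x :: m, ⟨by simp [hm1], ?_⟩, rfl⟩
      intro z hz
      rcases List.mem_cons.mp hz with rfl | hzm
      · exact hx
      · exact hm2 z hzm
    · rintro ⟨l, ⟨hl1, hl2⟩, rfl⟩
      cases l with
      | nil => simp at hl1
      | cons x m =>
        have hx : x ∈ X := hl2 x (List.mem_cons_self)
        have hm : listCode m ∈ kTupZ X k :=
          ih.mpr ⟨m, ⟨by simpa using hl1, fun z hz => hl2 z (List.mem_cons_of_mem _ hz)⟩, rfl⟩
        refine ⟨?_, x, hx, listCode m, hm, rfl⟩
        rw [ZFSet.mem_powerset]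
        intro w hw
        rw [ZFSet.mem_powerset]
        simp only [listCode, ZFSet.pair, ZFSet.mem_pair] at hw
        rcases hw with rfl | rfl
        · intro u hu
          rw [ZFSet.mem_singleton.mp hu]
          exact ZFSet.mem_union.mpr (Or.inl hx)
        · intro u hu
          rcases ZFSet.mem_pair.mp hu with rfl | rfl
          · exact ZFSet.mem_union.mpr (Or.inl hx)
          · exact ZFSet.mem_union.mpr (Or.inr hm)

theorem mem_finTupZ {X : ZFSet} {z : ZFSet} :
    z ∈ finTupZ X ↔ ∃ l ∈ finTup X, z = listCode l := by
  simp only [finTupZ, ZFSet.mem_sUnion, ZFSet.mem_range, Set.mem_range]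
  constructor
  · rintro ⟨w, ⟨k, rfl⟩, hz⟩
    obtain ⟨l, ⟨-, hl2⟩, rfl⟩ := mem_kTupZ.mp hz
    exact ⟨l, hl2, rfl⟩
  · rintro ⟨l, hl, rfl⟩
    exact ⟨kTupZ X l.length, ⟨l.length, rfl⟩, mem_kTupZ.mpr ⟨l, ⟨rfl, hl⟩, rfl⟩⟩

theorem listCode_mem_codeZ {X : ZFSet} {A : Set (List ZFSet)} (hA : A ⊆ finTup X)
    {l : List ZFSet} : listCode l ∈ codeZ X A ↔ l ∈ A := by
  simp only [codeZ, ZFSet.mem_sep]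
  constructor
  · rintro ⟨-, m, hm, hlm⟩
    rwa [listCode_injective hlm]
  · intro hl
    exact ⟨mem_finTupZ.mpr ⟨l, hA hl, rfl⟩, l, hl, rfl⟩

theorem codeZ_finTup (X : ZFSet) : codeZ X (finTup X) = finTupZ X := by
  ext z
  simp only [codeZ, ZFSet.mem_sep, and_iff_left_iff_imp]
  intro hz
  exact mem_finTupZ.mp hz

theorem tup_subset_finTup (X : ZFSet) (k : ℕ) : tup X k ⊆ finTup X :=
  fun _ hl => hl.2

theorem IsPHom.mono {X Y : ZFSet} {h : Set (List ZFSet) → Set (List ZFSet)}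
    (hh : IsPHom X Y h) {A B : Set (List ZFSet)} (hA : A ⊆ finTup X) (hB : B ⊆ finTup X)
    (hAB : A ⊆ B) : h A ⊆ h B := by
  have : h A = h A ∩ h B := by
    rw [← hh.map_inter A hA B hB, Set.inter_eq_left.mpr hAB]
  rw [this]; exact Set.inter_subset_right

theorem flatten_singletons {k : ℕ} (g : Fin k → ZFSet) :
    (List.ofFn fun i => [g i]).flatten = List.ofFn g := by
  induction k with
  | zero => rfl
  | succ k ih => simp [List.ofFn_succ, ih]

theorem ofFn_getD {k : ℕ} (l : List ZFSet) (hk : l.length = k) :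
    (List.ofFn fun i : Fin k => l.getD i ∅) = l := by
  apply List.ext_getElem (by simp [hk])
  intro i h1 h2
  rw [List.getElem_ofFn]
  exact List.getD_eq_getElem _ _ (by omega : i < l.length)

theorem eq_singleton_getD {m : List ZFSet} (hm : m.length = 1) : m = [m.getD 0 ∅] := by
  match m, hm with
  | [z], _ => rfl

/-- The term `⟦1, ⟨y⟩, π⟧` of the term model, for `y ∈ Y`. -/
def piTerm (X Y : ZFSet) (y : ZFSet) (hy : y ∈ Y) : MStar X Y :=
  ⟨1, [y], ⟨rfl, fun z hz => by rw [List.mem_singleton.mp hz]; exact hy⟩, piFun⟩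

/-- The tuple of terms `(⟦1,⟨y₁⟩,π⟧, …, ⟦1,⟨y_k⟩,π⟧, q)` for `l = (y₁,…,y_k) ∈ Y^{<ω}`. -/
def tupTerm (X Y : ZFSet) (q : MStar X Y) (l : List ZFSet) (hl : l ∈ finTup Y) :
    Fin (l.length + 1) → MStar X Y :=
  Fin.lastCases q fun i => piTerm X Y (l.getD i ∅)
    (hl _ (by rw [List.getD_eq_getElem _ _ i.isLt]; exact List.getElem_mem _))

theorem set_eq (X Y : ZFSet) (A : Set (List ZFSet)) (hA : A ⊆ finTup X)
    (q : MStar X Y) (hq0 : q.k = 0) (hqf : ∀ m, q.f m = codeZ X A)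
    (l : List ZFSet) (hl : l ∈ finTup Y) :
    {l₁ | ∃ a : Fin (l.length + 1) → List ZFSet,
      (∀ i, a i ∈ tup X (tupTerm X Y q l hl i).k) ∧
      l₁ = (List.ofFn a).flatten ∧
      listCode (List.ofFn fun i : Fin l.length =>
        (tupTerm X Y q l hl i.castSucc).f (a i.castSucc)) ∈
        (tupTerm X Y q l hl (Fin.last l.length)).f (a (Fin.last l.length))} =
    A ∩ tup X l.length := by
  have hfc : ∀ i : Fin l.length, (tupTerm X Y q l hl i.castSucc).f = piFun := by
    intro i; simp [tupTerm, Fin.lastCases_castSucc, piTerm]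
  have hkc : ∀ i : Fin l.length, (tupTerm X Y q l hl i.castSucc).k = 1 := by
    intro i; simp [tupTerm, Fin.lastCases_castSucc, piTerm]
  have hlastT : tupTerm X Y q l hl (Fin.last l.length) = q := by
    simp [tupTerm]
  ext m
  constructor
  · rintro ⟨a, ha, rfl, hP⟩
    have hlast : a (Fin.last l.length) = [] := by
      have h0 := (ha (Fin.last l.length)).1
      rw [hlastT, hq0] at h0
      exact List.length_eq_zero_iff.mp h0
    have hone : ∀ i : Fin l.length, a i.castSucc = [(a i.castSucc).getD 0 ∅] := by
      intro i
      exact eq_singleton_getD (hkc i ▸ (ha i.castSucc).1)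
    have hflat : (List.ofFn a).flatten =
        List.ofFn fun i : Fin l.length => (a i.castSucc).getD 0 ∅ := by
      rw [List.ofFn_succ', List.concat_eq_append, List.flatten_append, hlast]
      rw [show (fun i : Fin l.length => a i.castSucc) =
            (fun i : Fin l.length => [(a i.castSucc).getD 0 ∅]) from funext hone]
      simp [flatten_singletons]
    have hPA : (List.ofFn fun i : Fin l.length => (a i.castSucc).getD 0 ∅) ∈ A := by
      apply (listCode_mem_codeZ hA).mp
      simp only [hfc, hlastT, hqf, piFun] at hP
      exact hP
    constructor
    · rw [hflat]; exact hPA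
    · rw [hflat]
      refine ⟨by simp, ?_⟩
      intro z hz
      obtain ⟨i, rfl⟩ := List.mem_ofFn.mp hz
      exact (ha i.castSucc).2 _ (by rw [hone i]; exact List.mem_cons_self)
  · rintro ⟨hmA, hmlen, hmX⟩
    refine ⟨Fin.lastCases [] (fun i : Fin l.length => [m.getD ↑i ∅]), ?_, ?_, ?_⟩
    · intro i
      induction i using Fin.lastCases with
      | last =>
        simp only [Fin.lastCases_last]
        rw [hlastT, hq0]
        exact ⟨rfl, by simp⟩
      | cast i =>
        simp only [Fin.lastCases_castSucc]
        rw [hkc i]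
        refine ⟨rfl, ?_⟩
        intro z hz
        rw [List.mem_singleton.mp hz]
        have hilt : (i : ℕ) < m.length := by rw [hmlen]; exact i.isLt
        rw [List.getD_eq_getElem _ _ hilt]
        exact hmX _ (List.getElem_mem hilt)
    · rw [List.ofFn_succ', List.concat_eq_append, List.flatten_append]
      simp only [Fin.lastCases_castSucc, Fin.lastCases_last, flatten_singletons,
        List.flatten_cons, List.flatten_nil, List.append_nil]
      rw [ofFn_getD m hmlen]
    · simp only [hfc, hlastT, hqf, piFun, Fin.lastCases_castSucc, Fin.lastCases_last,
        List.getD_cons_zero]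
      rw [ofFn_getD m hmlen]
      exact (listCode_mem_codeZ hA).mpr hmA

/-- Let `h : 𝒫_X → 𝒫_Y` be a homomorphism of 𝒫-structures, let `coll` be the
Mostowski collapse of the term model, and let `j : V → M` be the induced elementary
embedding `j(p) = ⟦0,⟨⟩,c_p⟧ = coll (j* p)`. Assume Łoś's theorem (here, its
instances for the tuple-membership formulas `⟨v₁,…,v_k⟩ ∈ v_{k+1}`, in the collapsed
form) and the identification `y = ⟦1,⟨y⟩,π⟧` for `y ∈ Y`. Then for all
`A ⊆ X^{<ω}`, `h(A) = j(A) ∩ Y^{<ω}`; moreover `Y^{<ω} ⊆ j(X^{<ω})` and `Y ⊆ j(X)`.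
(Tuples are compared with ZF-sets via their Kuratowski codes: `A` corresponds to the
ZF-set `codeZ X A`, and `X^{<ω}` to `finTupZ X`.) -/
theorem derived_from_collapse (X Y : ZFSet) (hX : X.IsTransitive) (hY : Y.IsTransitive)
    (h : Set (List ZFSet) → Set (List ZFSet)) (hh : IsPHom X Y h)
    (coll : MStar X Y → ZFSet)
    (hmem : ∀ p q : MStar X Y, coll p ∈ coll q ↔ memStar X Y h p q)
    (heq : ∀ p q : MStar X Y, coll p = coll q ↔ eqStar X Y h p q)
    (htrans : ∀ (q : MStar X Y), ∀ z ∈ coll q, ∃ p : MStar X Y, z = coll p)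
    (hPi : ∀ (y : ZFSet) (hy : y ∈ Y),
      coll ⟨1, [y], ⟨rfl, by intro z hz; rw [List.mem_singleton.mp hz]; exact hy⟩,
        piFun⟩ = y)
    (hLosTuple : ∀ k : ℕ, LosHolds X Y h (k + 1)
      (fun v => listCode (List.ofFn fun i : Fin k => v i.castSucc) ∈ v (Fin.last k))
      (fun t => listCode (List.ofFn fun i : Fin k => coll (t i.castSucc)) ∈
        coll (t (Fin.last k)))) :
    (∀ A ⊆ finTup X, ∀ l ∈ finTup Y,
      (l ∈ h A ↔ listCode l ∈ coll (jStar X Y (codeZ X A)))) ∧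
    (∀ l ∈ finTup Y, listCode l ∈ coll (jStar X Y (finTupZ X))) ∧
    ∀ y ∈ Y, y ∈ coll (jStar X Y X) := by
  have hPi' : ∀ (y : ZFSet) (hy : y ∈ Y), coll (piTerm X Y y hy) = y := fun y hy => hPi y hy
  have key : ∀ A ⊆ finTup X, ∀ l ∈ finTup Y,
      (l ∈ h A ↔ listCode l ∈ coll (jStar X Y (codeZ X A))) := by
    intro A hA l hl
    have hlos := hLosTuple l.length (tupTerm X Y (jStar X Y (codeZ X A)) l hl)
    beta_reduce at hlos
    rw [set_eq X Y A hA (jStar X Y (codeZ X A)) rfl (fun _ => rfl) l hl] at hlos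
    have hcoll : ∀ i : Fin l.length,
        coll (tupTerm X Y (jStar X Y (codeZ X A)) l hl i.castSucc) = l.getD ↑i ∅ := by
      intro i
      simp only [tupTerm, Fin.lastCases_castSucc]
      exact hPi' _ _
    simp only [hcoll] at hlos
    rw [ofFn_getD l rfl] at hlos
    have hbflat : (List.ofFn fun i =>
        (tupTerm X Y (jStar X Y (codeZ X A)) l hl i).b).flatten = l := by
      rw [List.ofFn_succ', List.concat_eq_append, List.flatten_append]
      simp only [tupTerm, Fin.lastCases_castSucc, Fin.lastCases_last, piTerm, jStar,
        flatten_singletons, List.flatten_cons, List.flatten_nil, List.append_nil]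
      rw [ofFn_getD l rfl]
    rw [hbflat] at hlos
    have hlastT : tupTerm X Y (jStar X Y (codeZ X A)) l hl (Fin.last l.length) =
        jStar X Y (codeZ X A) := by simp [tupTerm]
    rw [hlastT] at hlos
    rw [hh.map_inter A hA _ (tup_subset_finTup X _), hh.map_const] at hlos
    exact ⟨fun hla => hlos.mpr ⟨hla, rfl, hl⟩, fun hx => (hlos.mp hx).1⟩
  refine ⟨key, ?_, ?_⟩
  · intro l hl
    have h1 : l ∈ h (finTup X) := by
      apply hh.mono (tup_subset_finTup X l.length) (fun _ hx => hx)
        (tup_subset_finTup X l.length)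
      rw [hh.map_const]
      exact ⟨rfl, hl⟩
    have h2 := (key (finTup X) (fun _ hx => hx) l hl).mp h1
    rwa [codeZ_finTup] at h2
  · intro y hy
    have hSeq : {l | ∃ a₁ ∈ tup X 1, ∃ a₂ ∈ tup X 0, l = a₁ ++ a₂ ∧ piFun a₁ ∈ X} =
        tup X 1 := by
      ext l'
      constructor
      · rintro ⟨a₁, ha₁, a₂, ha₂, rfl, hp⟩
        rw [List.length_eq_zero_iff.mp ha₂.1, List.append_nil]
        exact ha₁
      · rintro ⟨hl1, hl2⟩
        obtain ⟨z, rfl⟩ : ∃ z, l' = [z] := ⟨l'.getD 0 ∅, eq_singleton_getD hl1⟩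
        exact ⟨[z], ⟨rfl, hl2⟩, [], ⟨rfl, by simp⟩, (List.append_nil _).symm,
          hl2 z (List.mem_cons_self)⟩
    have hm : memStar X Y h (piTerm X Y y hy) (jStar X Y X) := by
      show [y] ++ [] ∈ h {l | ∃ a₁ ∈ tup X 1, ∃ a₂ ∈ tup X 0, l = a₁ ++ a₂ ∧ piFun a₁ ∈ X}
      rw [hSeq, hh.map_const]
      exact ⟨rfl, fun z hz => by rw [List.mem_singleton.mp hz]; exact hy⟩
    have h3 := (hmem (piTerm X Y y hy) (jStar X Y X)).mpr hm
    rwa [hPi' y hy] at h3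

end WVP
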